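/- Let λ ∈ ℂ ∪ {∞}, let X denote either A or B, and let W_X(λ) be the Lie algebra defined below with basis {L_n, X_n : n ∈ ℤ}. For w ∈ W_X(λ), the adjoint map ad_w is locally nilpotent (i.e., for every y ∈ W_X(λ) there exists k ∈ ℕ with ad_w^k(y) = 0) if and only if w lies in the subspace spanned by {X_n : n ∈ ℤ}. -/

import Mathlib

open Sum


/-- The coefficient `n(n+1)λ`, where `λ = ∞` (encoded by `none`) gives `n²`. -/
def lamTerm (lam : Option ℂ) (n : ℤ) : ℂ :=
  match lam with
  | some l => (n : ℂ) * ((n : ℂ) + 1) * l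
  | none => (n : ℂ) ^ 2

/-- Structure constant for the bracket `[L_n, A_m]` in `W_A(λ)`. -/
def omegaA (lam : Option ℂ) (n m : ℤ) : ℂ :=
  (n : ℂ) + (m : ℂ) + (if m = 0 then lamTerm lam n else 0)

/-- Structure constant for the bracket `[L_n, B_m]` in `W_B(λ)`. -/
def omegaB (lam : Option ℂ) (n m : ℤ) : ℂ :=
  (m : ℂ) - (if n + m = 0 then lamTerm lam n else 0)


section Helpers
variable {L : Type} [LieRing L] [LieAlgebra ℂ L] (b : Module.Basis (ℤ ⊕ ℤ) ℂ L)

private lemma lie_finset_sum {ι : Type*} [DecidableEq ι] (s : Finset ι) (f : ι → L) (x : L) :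
    ⁅x, ∑ a ∈ s, f a⁆ = ∑ a ∈ s, ⁅x, f a⁆ := by
  induction s using Finset.induction_on with
  | empty => simp
  | insert _ _ h ih => rw [Finset.sum_insert h, Finset.sum_insert h, lie_add, ih]

private lemma finset_sum_lie {ι : Type*} [DecidableEq ι] (s : Finset ι) (f : ι → L) (x : L) :
    ⁅∑ a ∈ s, f a, x⁆ = ∑ a ∈ s, ⁅f a, x⁆ := by
  induction s using Finset.induction_on with
  | empty => simp
  | insert _ _ h ih => rw [Finset.sum_insert h, Finset.sum_insert h, add_lie, ih]

lemma aux_lie_expand (w y : L) :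
    ⁅w, y⁆ = (b.repr w).sum fun i ci => (b.repr y).sum fun j cj => (ci * cj) • ⁅b i, b j⁆ := by
  have hy : ∀ x : L, ⁅x, y⁆ = (b.repr y).sum fun j cj => cj • ⁅x, b j⁆ := by
    intro x
    conv_lhs => rw [← b.linearCombination_repr y]
    rw [Finsupp.linearCombination_apply, Finsupp.sum, Finsupp.sum, lie_finset_sum]
    exact Finset.sum_congr rfl fun j _ => by rw [lie_smul]
  have hw : ⁅w, y⁆ = (b.repr w).sum fun i ci => ci • ⁅b i, y⁆ := by
    conv_lhs => rw [← b.linearCombination_repr w]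
    rw [Finsupp.linearCombination_apply, Finsupp.sum, Finsupp.sum, finset_sum_lie]
    exact Finset.sum_congr rfl fun i _ => by rw [smul_lie]
  rw [hw]
  refine Finsupp.sum_congr fun i _ => ?_
  rw [hy, Finsupp.smul_sum]
  refine Finsupp.sum_congr fun j _ => ?_
  rw [smul_smul]

/-- coefficient of `L_t` in `⁅b i, b j⁆` -/
def coefL (i j : ℤ ⊕ ℤ) (t : ℤ) : ℂ :=
  match i, j with
  | inl n, inl s => if n + s = t then (s : ℂ) - n else 0
  | _, _ => 0

variable (ω : ℤ → ℤ → ℂ)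
    (hLL : ∀ n m : ℤ,
      ⁅b (Sum.inl n), b (Sum.inl m)⁆ = ((m : ℂ) - (n : ℂ)) • b (Sum.inl (n + m)))
    (hLX : ∀ n m : ℤ, ⁅b (Sum.inl n), b (Sum.inr m)⁆ = ω n m • b (Sum.inr (n + m)))
    (hXX : ∀ n m : ℤ, ⁅b (Sum.inr n), b (Sum.inr m)⁆ = 0)

include hLL hLX hXX in
lemma repr_basis_lie (i j : ℤ ⊕ ℤ) (t : ℤ) :
    b.repr ⁅b i, b j⁆ (inl t) = coefL i j t := by
  cases i with
  | inl n =>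
    cases j with
    | inl s =>
      rw [hLL, map_smul, Finsupp.smul_apply, b.repr_self]
      by_cases h : n + s = t <;> simp [coefL, Finsupp.single_apply, h, mul_comm]
    | inr s =>
      rw [hLX, map_smul, Finsupp.smul_apply, b.repr_self]
      simp [coefL, Finsupp.single_apply]
  | inr n =>
    cases j with
    | inl s =>
      rw [← lie_skew, hLX, map_neg, map_smul, Finsupp.neg_apply, Finsupp.smul_apply,
        b.repr_self]
      simp [coefL, Finsupp.single_apply]
    | inr s => rw [hXX]; simp [coefL]

include hLL hLX hXX in
lemma repr_lie_apply (w y : L) (t : ℤ) :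
    b.repr ⁅w, y⁆ (inl t)
      = (b.repr w).sum fun i ci => (b.repr y).sum fun j cj => ci * cj * coefL i j t := by
  rw [aux_lie_expand b w y, map_finsuppSum, Finsupp.sum_apply]
  refine Finsupp.sum_congr fun i _ => ?_
  rw [map_finsuppSum, Finsupp.sum_apply]
  refine Finsupp.sum_congr fun j _ => ?_
  rw [map_smul, Finsupp.smul_apply, smul_eq_mul, repr_basis_lie b ω hLL hLX hXX, mul_assoc]

lemma mem_span_inr_iff (w : L) :
    w ∈ Submodule.span ℂ (Set.range fun n : ℤ => b (Sum.inr n)) ↔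
      ∀ n : ℤ, b.repr w (inl n) = 0 := by
  constructor
  · intro hw n
    have hle : Submodule.span ℂ (Set.range fun n : ℤ => b (Sum.inr n)) ≤
        LinearMap.ker (b.coord (inl n)) := by
      rw [Submodule.span_le]
      rintro _ ⟨s, rfl⟩
      simp [LinearMap.mem_ker, Module.Basis.coord_apply, Finsupp.single_apply]
    have := hle hw
    simpa [LinearMap.mem_ker, Module.Basis.coord_apply] using this
  · intro h
    rw [← b.linearCombination_repr w, Finsupp.linearCombination_apply, Finsupp.sum]
    apply Submodule.sum_mem
    intro j hj
    apply Submodule.smul_mem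
    cases j with
    | inl n => exact absurd (h n) (Finsupp.mem_support_iff.mp hj)
    | inr s => exact Submodule.subset_span ⟨s, rfl⟩

end Helpers

/-- for `w ∈ W_X(λ)` (where `X = A` or `X = B`), the adjoint map `ad_w` is
locally nilpotent if and only if `w` lies in the span of `{X_n : n ∈ ℤ}`. -/
theorem stmt_14 (lam : Option ℂ) (L : Type) [LieRing L] [LieAlgebra ℂ L]
    (b : Module.Basis (ℤ ⊕ ℤ) ℂ L) (ω : ℤ → ℤ → ℂ)
    (hω : (∀ n m : ℤ, ω n m = omegaA lam n m) ∨ (∀ n m : ℤ, ω n m = omegaB lam n m))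
    (hLL : ∀ n m : ℤ,
      ⁅b (Sum.inl n), b (Sum.inl m)⁆ = ((m : ℂ) - (n : ℂ)) • b (Sum.inl (n + m)))
    (hLX : ∀ n m : ℤ, ⁅b (Sum.inl n), b (Sum.inr m)⁆ = ω n m • b (Sum.inr (n + m)))
    (hXX : ∀ n m : ℤ, ⁅b (Sum.inr n), b (Sum.inr m)⁆ = 0) :
    ∀ w : L,
      (∀ y : L, ∃ k : ℕ, ((LieAlgebra.ad ℂ L w) ^ k) y = 0) ↔
        w ∈ Submodule.span ℂ (Set.range fun n : ℤ => b (Sum.inr n)) := by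
  intro w
  constructor
  · -- locally nilpotent → in span of X's
    intro hnil
    rw [mem_span_inr_iff]
    by_contra hc
    push_neg at hc
    obtain ⟨n0, hn0⟩ := hc
    -- the finite set of L-degrees occurring in w
    let T : Finset ℤ := (b.repr w).support.preimage Sum.inl
      Sum.inl_injective.injOn
    have hmemT : ∀ n : ℤ, n ∈ T ↔ b.repr w (inl n) ≠ 0 := by
      intro n; simp [T, Finsupp.mem_support_iff]
    have hTne : T.Nonempty := ⟨n0, (hmemT n0).2 hn0⟩
    set p := T.min' hTne with hp
    have hap : b.repr w (inl p) ≠ 0 := (hmemT p).1 (T.min'_mem hTne)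
    have hmin : ∀ n : ℤ, b.repr w (inl n) ≠ 0 → p ≤ n :=
      fun n hn => T.min'_le n ((hmemT n).2 hn)
    set m : ℤ := if 0 ≤ p then p + 1 else p - 1 with hm
    have hmk : ∀ k : ℕ, m + k * p - p ≠ 0 := by
      intro k
      rcases le_or_gt 0 p with h | h
      · have h2 : 0 ≤ (k : ℤ) * p := mul_nonneg (Int.natCast_nonneg k) h
        rw [hm, if_pos h]; omega
      · have h2 : (k : ℤ) * p ≤ 0 :=
          mul_nonpos_of_nonneg_of_nonpos (Int.natCast_nonneg k) h.le
        rw [hm, if_neg (not_le.mpr h)]; omega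
    have key : ∀ (y : L) (M : ℤ), (∀ s : ℤ, s < M → b.repr y (inl s) = 0) →
        (∀ s : ℤ, s < M + p → b.repr ⁅w, y⁆ (inl s) = 0) ∧
          b.repr ⁅w, y⁆ (inl (M + p))
            = b.repr w (inl p) * b.repr y (inl M) * ((M : ℂ) - (p : ℂ)) := by
      intro y M hy
      constructor
      · intro s hs
        rw [repr_lie_apply b ω hLL hLX hXX, Finsupp.sum]
        apply Finset.sum_eq_zero
        intro i hi
        rw [Finsupp.sum]
        apply Finset.sum_eq_zero
        intro j hj
        cases i with
        | inr n => simp [coefL]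
        | inl n =>
          cases j with
          | inr u => simp [coefL]
          | inl u =>
            have h1 : p ≤ n := hmin n (Finsupp.mem_support_iff.mp hi)
            have h2 : ¬ u < M := fun hu => (Finsupp.mem_support_iff.mp hj) (hy u hu)
            have h3 : ¬ (n + u = s) := by omega
            simp [coefL, h3]
      · rw [repr_lie_apply b ω hLL hLX hXX, Finsupp.sum]
        refine (Finset.sum_eq_single (Sum.inl p) ?_ ?_).trans ?_
        · intro i hi hne
          cases i with
          | inr n => rw [Finsupp.sum]; exact Finset.sum_eq_zero fun j _ => by simp [coefL]
          | inl n =>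
            have h1 : p ≤ n := hmin n (Finsupp.mem_support_iff.mp hi)
            have h1' : p ≠ n := fun h => hne (by rw [h])
            rw [Finsupp.sum]
            apply Finset.sum_eq_zero
            intro j hj
            cases j with
            | inr u => simp [coefL]
            | inl u =>
              have h2 : ¬ u < M := fun hu => (Finsupp.mem_support_iff.mp hj) (hy u hu)
              have h3 : ¬ (n + u = M + p) := by omega
              simp [coefL, h3]
        · intro habs
          exact absurd (Finsupp.mem_support_iff.mpr hap) habs
        · rw [Finsupp.sum]
          refine (Finset.sum_eq_single (Sum.inl M) ?_ ?_).trans ?_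
          · intro j hj hne
            cases j with
            | inr u => simp [coefL]
            | inl u =>
              have h2 : ¬ u < M := fun hu => (Finsupp.mem_support_iff.mp hj) (hy u hu)
              have h2' : M ≠ u := fun h => hne (by rw [h])
              have h3 : ¬ (p + u = M + p) := by omega
              simp [coefL, h3]
          · intro habs
            rw [Finsupp.notMem_support_iff.mp habs]
            ring
          · simp [coefL, add_comm]
    have main : ∀ k : ℕ,
        (∀ s : ℤ, s < m + k * p →
            b.repr (((LieAlgebra.ad ℂ L w) ^ k) (b (inl m))) (inl s) = 0) ∧
          b.repr (((LieAlgebra.ad ℂ L w) ^ k) (b (inl m))) (inl (m + k * p)) ≠ 0 := by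
      intro k
      induction k with
      | zero =>
        constructor
        · intro s hs
          simp only [pow_zero, Module.End.one_apply, b.repr_self]
          rw [Finsupp.single_apply]
          have : ¬ ((inl m : ℤ ⊕ ℤ) = inl s) := by
            simp only [inl.injEq]; omega
          simp [this]
        · simp only [pow_zero, Module.End.one_apply, b.repr_self]
          have : m + (0 : ℕ) * p = m := by push_cast; ring
          rw [this, Finsupp.single_apply]
          simp
      | succ k ih =>
        obtain ⟨hlow, hcoef⟩ := ih
        have hk := key (((LieAlgebra.ad ℂ L w) ^ k) (b (inl m))) (m + k * p) hlow
        have heq : ((LieAlgebra.ad ℂ L w) ^ (k + 1)) (b (inl m))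
            = ⁅w, ((LieAlgebra.ad ℂ L w) ^ k) (b (inl m))⁆ := by
          rw [pow_succ', Module.End.mul_apply, LieAlgebra.ad_apply]
        have hidx : m + ((k : ℕ) + 1 : ℕ) * p = (m + k * p) + p := by push_cast; ring
        constructor
        · intro s hs
          rw [heq]
          apply hk.1
          omega
        · rw [heq, hidx, hk.2]
          refine mul_ne_zero (mul_ne_zero hap hcoef) ?_
          have : ((m + k * p : ℤ) : ℂ) - (p : ℂ) = ((m + k * p - p : ℤ) : ℂ) := by
            push_cast; ring
          rw [this]
          exact Int.cast_ne_zero.mpr (hmk k)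
    obtain ⟨k, hk0⟩ := hnil (b (inl m))
    have hmain := (main k).2
    rw [hk0] at hmain
    simp at hmain
  · -- in span of X's → locally nilpotent (in fact ad² = 0)
    intro hw y
    refine ⟨2, ?_⟩
    have hspan0 : ∀ n : ℤ, b.repr w (inl n) = 0 := (mem_span_inr_iff b w).mp hw
    have claim1 : ∀ z : L, ⁅w, z⁆ ∈ Submodule.span ℂ (Set.range fun n : ℤ => b (Sum.inr n)) := by
      intro z
      rw [aux_lie_expand b w z, Finsupp.sum]
      apply Submodule.sum_mem
      intro i hi
      rw [Finsupp.sum]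
      apply Submodule.sum_mem
      intro j hj
      apply Submodule.smul_mem
      cases i with
      | inl n => exact absurd (hspan0 n) (Finsupp.mem_support_iff.mp hi)
      | inr n =>
        cases j with
        | inl u =>
          rw [← lie_skew, hLX]
          exact Submodule.neg_mem _ (Submodule.smul_mem _ _ (Submodule.subset_span ⟨u + n, rfl⟩))
        | inr u => rw [hXX]; exact Submodule.zero_mem _
    have claim2 : ∀ z : L,
        z ∈ Submodule.span ℂ (Set.range fun n : ℤ => b (Sum.inr n)) → ⁅w, z⁆ = 0 := by
      intro z hz
      have hz0 : ∀ n : ℤ, b.repr z (inl n) = 0 := (mem_span_inr_iff b z).mp hz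
      rw [aux_lie_expand b w z, Finsupp.sum]
      apply Finset.sum_eq_zero
      intro i hi
      rw [Finsupp.sum]
      apply Finset.sum_eq_zero
      intro j hj
      cases i with
      | inl n => exact absurd (hspan0 n) (Finsupp.mem_support_iff.mp hi)
      | inr n =>
        cases j with
        | inl u => exact absurd (hz0 u) (Finsupp.mem_support_iff.mp hj)
        | inr u => rw [hXX, smul_zero]
    rw [pow_two, Module.End.mul_apply, LieAlgebra.ad_apply, LieAlgebra.ad_apply]
    exact claim2 _ (claim1 y)
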